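/- Let A be a p-adic Banach algebra over ℤ_p with p = 2, and let φ : 1 + 2A → ℚ_2 be a map satisfying: φ is a group homomorphism on 1 + 4A, φ(u^n) = nφ(u) whenever powers of a single element are taken, and φ(aua^{-1}) = φ(u) for all units a and u ∈ 1 + 2A. Then φ is a group homomorphism on 1 + 2A. -/
import Mathlib


/-- Let `A` be a `2`-adic Banach algebra over `ℤ_2` (the unit ball of
a `2`-adic Banach `ℚ_2`-algebra: a complete nonarchimedean normed ring all of whose
elements have norm `≤ 1`), and let `φ : Aˣ → ℚ_2` be a map satisfying: `φ` is a group
homomorphism on `1 + 4A`; `φ(u^n) = n·φ(u)` for `u ∈ 1 + 2A` and all integer powers;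
and `φ(a u a⁻¹) = φ(u)` for all units `a` and `u ∈ 1 + 2A`.  Then `φ` is a group
homomorphism on `1 + 2A`. -/
theorem stmt14 (A : Type*) [NormedRing A] [CompleteSpace A] [IsUltrametricDist A]
    (hball : ∀ x : A, ‖x‖ ≤ 1)
    (φ : Aˣ → ℚ_[2])
    (h4 : ∀ u v : Aˣ, (∃ a : A, (u : A) = 1 + 4 * a) → (∃ b : A, (v : A) = 1 + 4 * b) →
      φ (u * v) = φ u + φ v)
    (hpow : ∀ u : Aˣ, (∃ a : A, (u : A) = 1 + 2 * a) → ∀ n : ℤ,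
      φ (u ^ n) = (n : ℚ_[2]) * φ u)
    (hconj : ∀ u a : Aˣ, (∃ b : A, (u : A) = 1 + 2 * b) → φ (a * u * a⁻¹) = φ u) :
    ∀ u v : Aˣ, (∃ a : A, (u : A) = 1 + 2 * a) → (∃ b : A, (v : A) = 1 + 2 * b) →
      φ (u * v) = φ u + φ v := by
  -- abbreviations for membership
  set M2 : Aˣ → Prop := fun u => ∃ a : A, (u : A) = 1 + 2 * a with hM2
  set M4 : Aˣ → Prop := fun u => ∃ a : A, (u : A) = 1 + 4 * a with hM4
  -- 1+4A ⊆ 1+2A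
  have mem2_of4 : ∀ u : Aˣ, M4 u → M2 u := by
    rintro u ⟨a, ha⟩; exact ⟨2 * a, by rw [ha]; noncomm_ring⟩
  -- 1+2A closed under multiplication
  have mem2_mul : ∀ u v : Aˣ, M2 u → M2 v → M2 (u * v) := by
    rintro u v ⟨a, ha⟩ ⟨b, hb⟩
    exact ⟨a + b + 2 * (a * b), by rw [Units.val_mul, ha, hb]; noncomm_ring⟩
  -- 1+4A closed under multiplication
  have mem4_mul : ∀ u v : Aˣ, M4 u → M4 v → M4 (u * v) := by
    rintro u v ⟨a, ha⟩ ⟨b, hb⟩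
    exact ⟨a + b + 4 * (a * b), by rw [Units.val_mul, ha, hb]; noncomm_ring⟩
  -- inverses of 1+2A elements
  have mem2_inv : ∀ u : Aˣ, M2 u → M2 u⁻¹ := by
    rintro u ⟨a, ha⟩
    refine ⟨-(a * (↑u⁻¹ : A)), ?_⟩
    have hui : (u : A) * ↑u⁻¹ = 1 := u.mul_inv
    have hiu : (↑u⁻¹ : A) * u = 1 := u.inv_mul
    have h1 : (u : A) * (1 + 2 * -(a * (↑u⁻¹ : A))) = 1 := by
      have hcomm : (u : A) * (2 * a) = (2 * a) * (u : A) := by rw [ha]; noncomm_ring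
      calc (u : A) * (1 + 2 * -(a * (↑u⁻¹ : A)))
          = (u : A) - ((u : A) * (2 * a)) * ↑u⁻¹ := by noncomm_ring
        _ = (u : A) - ((2 * a) * (u : A)) * ↑u⁻¹ := by rw [hcomm]
        _ = (u : A) - (2 * a) * ((u : A) * ↑u⁻¹) := by noncomm_ring
        _ = 1 := by rw [hui, ha]; noncomm_ring
    calc (↑u⁻¹ : A) = ↑u⁻¹ * ((u : A) * (1 + 2 * -(a * (↑u⁻¹ : A)))) := by rw [h1, mul_one]
      _ = (↑u⁻¹ * (u : A)) * (1 + 2 * -(a * (↑u⁻¹ : A))) := by rw [mul_assoc]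
      _ = 1 + 2 * -(a * (↑u⁻¹ : A)) := by rw [hiu, one_mul]
  -- squares of 1+2A elements lie in 1+4A
  have mem4_sq : ∀ u : Aˣ, M2 u → M4 (u ^ 2) := by
    rintro u ⟨a, ha⟩
    exact ⟨a + a * a, by rw [Units.val_pow_eq_pow_val, pow_two, ha]; noncomm_ring⟩
  -- conjugates of 1+4A elements lie in 1+4A
  have mem4_conj : ∀ x a : Aˣ, M4 x → M4 (a * x * a⁻¹) := by
    rintro x a ⟨c, hc⟩
    refine ⟨(a : A) * c * ↑a⁻¹, ?_⟩
    have hai : (a : A) * ↑a⁻¹ = 1 := a.mul_inv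
    calc ((a * x * a⁻¹ : Aˣ) : A) = (a : A) * (1 + 4 * c) * ↑a⁻¹ := by
          rw [Units.val_mul, Units.val_mul, hc]
      _ = (a : A) * ↑a⁻¹ + 4 * ((a : A) * c * ↑a⁻¹) := by noncomm_ring
      _ = 1 + 4 * ((a : A) * c * ↑a⁻¹) := by rw [hai]
  -- the "commutator" u v (v u)⁻¹ of 1+2A elements lies in 1+4A
  have mem4_comm : ∀ u v : Aˣ, M2 u → M2 v → M4 (u * v * (v * u)⁻¹) := by
    rintro u v ⟨a, ha⟩ ⟨b, hb⟩
    refine ⟨(a * b - b * a) * (↑(v * u)⁻¹ : A), ?_⟩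
    have hvu : ((v * u : Aˣ) : A) * ↑(v * u)⁻¹ = 1 := (v * u).mul_inv
    have key : ((u : A) * v) = ((v * u : Aˣ) : A) + 4 * (a * b - b * a) := by
      rw [Units.val_mul, ha, hb]; noncomm_ring
    calc ((u * v * (v * u)⁻¹ : Aˣ) : A) = ((u : A) * v) * ↑(v * u)⁻¹ := by
          rw [Units.val_mul, Units.val_mul]
      _ = (((v * u : Aˣ) : A) + 4 * (a * b - b * a)) * ↑(v * u)⁻¹ := by rw [key]
      _ = ((v * u : Aˣ) : A) * ↑(v * u)⁻¹ + 4 * ((a * b - b * a) * ↑(v * u)⁻¹) := by noncomm_ring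
      _ = 1 + 4 * ((a * b - b * a) * ↑(v * u)⁻¹) := by rw [hvu]
  -- doubling: φ(w²) = 2 φ(w) for w ∈ 1+2A
  have hdouble : ∀ w : Aˣ, M2 w → φ (w ^ 2) = 2 * φ w := by
    intro w hw
    have h := hpow w hw 2
    rwa [zpow_ofNat, show ((2 : ℤ) : ℚ_[2]) = 2 by norm_num] at h
  -- mixed additivity: x ∈ 1+4A, y ∈ 1+2A ⇒ φ(xy) = φ(x) + φ(y)
  have hmix : ∀ x y : Aˣ, M4 x → M2 y → φ (x * y) = φ x + φ y := by
    intro x y hx hy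
    have hx2 : M2 x := mem2_of4 x hx
    have hxy2 : M2 (x * y) := mem2_mul x y hx2 hy
    have hsq : (x * y) ^ 2 = x * (y * x * y⁻¹) * y ^ 2 := by
      simp [pow_two, mul_assoc, inv_mul_cancel_left]
    have hconjx : M4 (y * x * y⁻¹) := mem4_conj x y hx
    have e1 : φ ((x * y) ^ 2) = φ (x * (y * x * y⁻¹)) + φ (y ^ 2) := by
      rw [hsq]; exact h4 _ _ (mem4_mul x _ hx hconjx) (mem4_sq y hy)
    have e2 : φ (x * (y * x * y⁻¹)) = φ x + φ (y * x * y⁻¹) := h4 _ _ hx hconjx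
    have e3 : φ (y * x * y⁻¹) = φ x := hconj x y hx2
    have e4 : φ (y ^ 2) = 2 * φ y := hdouble y hy
    have e5 : φ ((x * y) ^ 2) = 2 * φ (x * y) := hdouble _ hxy2
    have : 2 * φ (x * y) = 2 * (φ x + φ y) := by
      rw [← e5, e1, e2, e3, e4]; ring
    exact mul_left_cancel₀ (two_ne_zero) this
  -- commutators have φ = 0
  have hcomm0 : ∀ u v : Aˣ, M2 u → M2 v → φ (u * v * (v * u)⁻¹) = 0 := by
    intro u v hu hv
    have hd4 : M4 (u * v * (v * u)⁻¹) := mem4_comm u v hu hv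
    have hvu2 : M2 (v * u) := mem2_mul v u hv hu
    have h1 : φ ((u * v * (v * u)⁻¹) * (v * u)) = φ (u * v * (v * u)⁻¹) + φ (v * u) :=
      hmix _ _ hd4 hvu2
    have h2 : (u * v * (v * u)⁻¹) * (v * u) = u * v := by group
    have h3 : φ (v * u) = φ (u * v) := by
      have h := hconj (u * v) u⁻¹ (mem2_mul u v hu hv)
      rwa [show u⁻¹ * (u * v) * u⁻¹⁻¹ = v * u by group] at h
    rw [h2, h3] at h1
    linear_combination -h1
  -- main argument
  intro u v hu hv
  have huv2 : M2 (u * v) := mem2_mul u v hu hv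
  have hui : M2 u⁻¹ := mem2_inv u hu
  -- the commutator d = u⁻¹ v u v⁻¹
  have hc : φ (u⁻¹ * v * (v * u⁻¹)⁻¹) = 0 := hcomm0 u⁻¹ v hui hv
  have hd4 : M4 (u⁻¹ * v * (v * u⁻¹)⁻¹) := mem4_comm u⁻¹ v hui hv
  -- (uv)² = u² * w  with  w = u⁻¹ v u v = d * v²
  have hsq : (u * v) ^ 2 = u ^ 2 * ((u⁻¹ * v * (v * u⁻¹)⁻¹) * v ^ 2) := by
    simp [pow_two, mul_assoc, mul_inv_rev, inv_inv, mul_inv_cancel_left, inv_mul_cancel_left]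
  have hw2 : M2 ((u⁻¹ * v * (v * u⁻¹)⁻¹) * v ^ 2) :=
    mem2_mul _ _ (mem2_of4 _ hd4) (mem2_of4 _ (mem4_sq v hv))
  have e1 : φ ((u * v) ^ 2) = φ (u ^ 2) + φ ((u⁻¹ * v * (v * u⁻¹)⁻¹) * v ^ 2) := by
    rw [hsq]; exact hmix _ _ (mem4_sq u hu) hw2
  have e2 : φ ((u⁻¹ * v * (v * u⁻¹)⁻¹) * v ^ 2) = φ (u⁻¹ * v * (v * u⁻¹)⁻¹) + φ (v ^ 2) :=
    hmix _ _ hd4 (mem2_of4 _ (mem4_sq v hv))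
  have e3 : φ ((u * v) ^ 2) = 2 * φ (u * v) := hdouble _ huv2
  have e4 : φ (u ^ 2) = 2 * φ u := hdouble u hu
  have e5 : φ (v ^ 2) = 2 * φ v := hdouble v hv
  have : 2 * φ (u * v) = 2 * (φ u + φ v) := by
    rw [← e3, e1, e2, hc, e4, e5]; ring
  exact mul_left_cancel₀ (two_ne_zero) this
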